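/- Let Φ be the fixed point starting with 0 of the morphism 0 ↦ 00101, 1 ↦ 11011, and let a, b be coprime positive integers with S(u) = a|u|_0 + b|u|_1. Then all but finitely many natural numbers lie in { S(u) : u a factor of Φ }. -/

import Mathlib

/-- the 5-uniform morphism φ: 0 ↦ 00101, 1 ↦ 11011 (on letters). -/
def phiMap (x : ℕ) : List ℕ := if x = 0 then [0, 0, 1, 0, 1] else [1, 1, 0, 1, 1]

/-- φ applied to a word. -/
def phiL (l : List ℕ) : List ℕ := l.flatMap phiMap

/-- `Phi m` is the `m`-th letter (0-indexed) of the fixed point Φ = φ^ω(0) of φ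
starting with 0: `φ^[m+1]([0])` has length `5^(m+1) > m` and is a prefix of Φ. -/
def Phi (m : ℕ) : ℕ := (phiL^[m + 1] [0]).getD m 0

/-- the length-`n` factor of `w` starting at position `i`. -/
def factorAt (w : ℕ → ℕ) (i n : ℕ) : List ℕ := (List.range n).map (fun j => w (i + j))

/-- `u` is a factor of the infinite word `w`. -/
def IsFactor (w : ℕ → ℕ) (u : List ℕ) : Prop := ∃ i, u = factorAt w i u.length

lemma length_phiMap (x : ℕ) : (phiMap x).length = 5 := by
  unfold phiMap; split <;> rfl

lemma phiL_cons (x : ℕ) (t : List ℕ) : phiL (x :: t) = phiMap x ++ phiL t := by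
  simp [phiL]

lemma phiL_append (l₁ l₂ : List ℕ) : phiL (l₁ ++ l₂) = phiL l₁ ++ phiL l₂ := by
  simp [phiL]

lemma length_phiL (l : List ℕ) : (phiL l).length = 5 * l.length := by
  induction l with
  | nil => rfl
  | cons x t ih =>
    rw [phiL_cons, List.length_append, ih, length_phiMap, List.length_cons]; ring

lemma phiL_iter_append (k : ℕ) (l₁ l₂ : List ℕ) :
    phiL^[k] (l₁ ++ l₂) = phiL^[k] l₁ ++ phiL^[k] l₂ := by
  induction k generalizing l₁ l₂ with
  | zero => rfl
  | succ k ih => simp [Function.iterate_succ_apply, phiL_append, ih]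

lemma length_W (k : ℕ) : (phiL^[k] [0]).length = 5 ^ k := by
  induction k with
  | zero => rfl
  | succ k ih =>
    rw [Function.iterate_succ_apply', length_phiL, ih, pow_succ]; ring

lemma W_succ (k : ℕ) : phiL^[k+1] [0] = phiL^[k] [0] ++ phiL^[k] [0,1,0,1] := by
  rw [Function.iterate_succ_apply]
  show phiL^[k] ([0,0,1,0,1]) = _
  rw [show ([0,0,1,0,1] : List ℕ) = [0] ++ [0,1,0,1] from rfl, phiL_iter_append]


lemma W_getD_mono (k j m : ℕ) (h : m < 5 ^ k) :
    (phiL^[k+j] [0]).getD m 0 = (phiL^[k] [0]).getD m 0 := by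
  induction j with
  | zero => rfl
  | succ j ih =>
    rw [show k + (j+1) = (k+j) + 1 from rfl, W_succ, List.getD_append, ih]
    rw [length_W]
    calc m < 5 ^ k := h
    _ ≤ 5 ^ (k + j) := Nat.pow_le_pow_right (by norm_num) (by omega)

lemma Phi_eq_W (k m : ℕ) (h : m < 5 ^ k) : Phi m = (phiL^[k] [0]).getD m 0 := by
  have hm : m < 5 ^ (m + 1) :=
    lt_of_lt_of_le (Nat.lt_pow_self (a := 5) (n := m) (by norm_num)) (Nat.pow_le_pow_right (by norm_num) (by omega))
  rcases Nat.le_total k (m+1) with hk | hk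
  · conv_lhs => rw [Phi, show m + 1 = k + (m + 1 - k) by omega]
    rw [W_getD_mono k _ m h]
  · unfold Phi
    rw [show k = (m + 1) + (k - (m+1)) by omega, W_getD_mono (m+1) _ m hm]

lemma take_phiL (l : List ℕ) (N r : ℕ) (hN : N < l.length) (hr : r ≤ 5) :
    (phiL l).take (5 * N + r) = phiL (l.take N) ++ (phiMap (l.getD N 0)).take r := by
  induction l generalizing N with
  | nil => simp at hN
  | cons x t ih =>
    cases N with
    | zero =>
      rw [phiL_cons]
      simp only [Nat.mul_zero, Nat.zero_add, List.take_zero, List.getD_cons_zero]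
      rw [List.take_append_of_le_length (by rw [length_phiMap]; exact hr)]
      rfl
    | succ N =>
      rw [phiL_cons, show 5 * (N+1) + r = (phiMap x).length + (5 * N + r) by rw [length_phiMap]; ring]
      rw [List.take_length_add_append, ih N (by simpa using hN)]
      rw [List.take_cons, List.getD_cons_succ, phiL_cons, List.append_assoc] <;> simp

def pre (N : ℕ) : List ℕ := (List.range N).map Phi
def c0 (N : ℕ) : ℕ := (pre N).count 0
def c1 (N : ℕ) : ℕ := (pre N).count 1

lemma length_pre (N : ℕ) : (pre N).length = N := by simp [pre]

lemma pre_eq (k N : ℕ) (h : N ≤ 5 ^ k) : pre N = (phiL^[k] [0]).take N := by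
  apply List.ext_getElem
  · rw [length_pre, List.length_take, length_W]; omega
  · intro i h1 h2
    rw [length_pre] at h1
    simp only [pre, List.getElem_map, List.getElem_range, List.getElem_take]
    rw [Phi_eq_W k i (by omega), List.getD_eq_getElem _ _ (by rw [length_W]; omega)]

lemma pre_rec (N r : ℕ) (hr : r ≤ 5) :
    pre (5 * N + r) = phiL (pre N) ++ (phiMap (Phi N)).take r := by
  have hN : N < 5 ^ (N + 1) :=
    lt_of_lt_of_le (Nat.lt_pow_self (a := 5) (n := N) (by norm_num)) (Nat.pow_le_pow_right (by norm_num) (by omega))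
  rw [pre_eq (N + 2) (5 * N + r) (by rw [pow_succ]; omega),
    Function.iterate_succ_apply', take_phiL _ N r (by rw [length_W]; exact hN) hr,
    ← pre_eq (N + 1) N hN.le, ← Phi_eq_W (N+1) N hN]

lemma pre_succ (N : ℕ) : pre (N + 1) = pre N ++ [Phi N] := by
  simp [pre, List.range_succ]

lemma Phi_binary (m : ℕ) : Phi m = 0 ∨ Phi m = 1 := by
  have hm : m < 5 ^ (m + 1) :=
    lt_of_lt_of_le (Nat.lt_pow_self (a := 5) (n := m) (by norm_num)) (Nat.pow_le_pow_right (by norm_num) (by omega))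
  rw [Phi_eq_W (m+1) m hm, List.getD_eq_getElem _ _ (by rw [length_W]; omega)]
  have : ∀ k, ∀ x ∈ phiL^[k] [0], x = 0 ∨ x = 1 := by
    intro k
    induction k with
    | zero => intro x hx; simp at hx; left; exact hx
    | succ k ih =>
      rw [Function.iterate_succ_apply']
      intro x hx
      obtain ⟨y, _, hx2⟩ := List.mem_flatMap.mp hx
      unfold phiMap at hx2
      split at hx2 <;> simp at hx2 <;> omega
  exact this (m+1) _ (List.getElem_mem _)

lemma count_phiL (l : List ℕ) (hb : ∀ x ∈ l, x = 0 ∨ x = 1) :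
    (phiL l).count 0 = 3 * l.count 0 + l.count 1 ∧
    (phiL l).count 1 = 2 * l.count 0 + 4 * l.count 1 := by
  induction l with
  | nil => simp [phiL]
  | cons x t ih =>
    obtain ⟨h1, h2⟩ := ih (fun y hy => hb y (List.mem_cons_of_mem x hy))
    have hx := hb x (List.mem_cons_self (a := x) (l := t))
    rw [phiL_cons]
    rcases hx with rfl | rfl <;>
      · simp [List.count_append, List.count_cons, h1, h2, phiMap]
        omega

lemma count_bin (l : List ℕ) (hb : ∀ x ∈ l, x = 0 ∨ x = 1) :
    l.count 0 + l.count 1 = l.length := by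
  induction l with
  | nil => rfl
  | cons x t ih =>
    have := ih (fun y hy => hb y (List.mem_cons_of_mem x hy))
    have hx := hb x (List.mem_cons_self (a := x) (l := t))
    rcases hx with rfl | rfl <;> simp [List.count_cons] <;> omega

lemma pre_binary (N : ℕ) : ∀ x ∈ pre N, x = 0 ∨ x = 1 := by
  intro x hx
  obtain ⟨j, _, rfl⟩ := List.mem_map.mp hx
  exact Phi_binary j

lemma c0_add_c1 (N : ℕ) : c0 N + c1 N = N := by
  have := count_bin (pre N) (pre_binary N)
  rwa [length_pre] at this

lemma c0_succ (N : ℕ) : c0 (N + 1) = c0 N + (if Phi N = 0 then 1 else 0) := by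
  unfold c0
  rw [pre_succ, List.count_append]
  by_cases h : Phi N = 0 <;> simp [h, List.count_cons]

lemma c0_rec (N r : ℕ) (hr : r ≤ 5) :
    c0 (5 * N + r) = 3 * c0 N + c1 N + ((phiMap (Phi N)).take r).count 0 := by
  unfold c0 c1
  rw [pre_rec N r hr, List.count_append, (count_phiL (pre N) (pre_binary N)).1]

lemma partial_count_bounds (x r : ℕ) (hr : r ≤ 5) :
    r ≤ 3 * ((phiMap x).take r).count 0 + 2 ∧ 3 * ((phiMap x).take r).count 0 ≤ r + 5 := by
  unfold phiMap
  split <;> (interval_cases r <;> simp_all) <;> decide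

noncomputable def F (N : ℕ) : ℤ := 3 * (c0 N : ℤ) - N

lemma F_rec_lower (N r : ℕ) (hr : r ≤ 5) : 2 * F N - 2 ≤ F (5 * N + r) := by
  have h1 := c0_rec N r hr
  have h2 := c0_add_c1 N
  have h3 := (partial_count_bounds (Phi N) r hr).1
  unfold F
  push_cast [h1]
  omega

lemma pos_base : ∀ n, 2 ≤ n → n < 10 → 3 ≤ F n := by
  have h2 : c0 2 = 2 ∧ c0 3 = 2 ∧ c0 4 = 3 ∧ c0 5 = 3 ∧ c0 6 = 4 ∧ c0 7 = 5 ∧ c0 8 = 5 ∧ c0 9 = 6 := by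
    unfold c0
    rw [pre_eq 2 2 (by norm_num), pre_eq 2 3 (by norm_num), pre_eq 2 4 (by norm_num),
      pre_eq 2 5 (by norm_num), pre_eq 2 6 (by norm_num), pre_eq 2 7 (by norm_num),
      pre_eq 2 8 (by norm_num), pre_eq 2 9 (by norm_num)]
    decide
  obtain ⟨e2, e3, e4, e5, e6, e7, e8, e9⟩ := h2
  intro n hn1 hn2
  unfold F
  interval_cases n <;> simp [e2, e3, e4, e5, e6, e7, e8, e9] <;> norm_num

lemma pos_all : ∀ n, 2 ≤ n → 3 ≤ F n := by
  intro n
  induction n using Nat.strong_induction_on with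
  | _ n ih =>
    intro hn
    by_cases h10 : n < 10
    · exact pos_base n hn h10
    · have hq : 2 ≤ n / 5 := by omega
      have hlt : n / 5 < n := by omega
      have h5 : n = 5 * (n / 5) + n % 5 := by omega
      have := F_rec_lower (n / 5) (n % 5) (by omega)
      have := ih (n / 5) hlt hq
      rw [← h5] at *
      omega

lemma pos_growth : ∀ k n, 2 * 5 ^ k ≤ n → (2 ^ k + 2 : ℤ) ≤ F n := by
  intro k
  induction k with
  | zero => intro n hn; simpa using pos_all n hn
  | succ k ih =>
    intro n hn
    have hq : 2 * 5 ^ k ≤ n / 5 := by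
      rw [Nat.le_div_iff_mul_le (by norm_num)]
      calc 2 * 5 ^ k * 5 = 2 * 5 ^ (k+1) := by ring
      _ ≤ n := hn
    have h1 := F_rec_lower (n / 5) (n % 5) (by omega)
    have h2 := ih (n / 5) hq
    have h5 : 5 * (n / 5) + n % 5 = n := by omega
    rw [h5] at h1
    have : (2 : ℤ) ^ (k + 1) = 2 * 2 ^ k := by ring
    omega

lemma pre_getD (K M : ℕ) (h : M < K) : (pre K).getD M 0 = Phi M := by
  rw [List.getD_eq_getElem _ _ (by rw [length_pre]; exact h)]
  simp [pre]

lemma Phi_rec (N r : ℕ) (hr : r < 5) : Phi (5 * N + r) = (phiMap (Phi N)).getD r 0 := by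
  rw [← pre_getD (5 * N + 5) (5 * N + r) (by omega), pre_rec N 5 (le_refl 5),
    List.take_of_length_le (by rw [length_phiMap]), List.getD_append_right
      (h := by rw [length_phiL, length_pre]; omega)]
  congr 1
  rw [length_phiL, length_pre]
  omega

lemma Phi_one_block (N : ℕ) (h : Phi N = 1) : Phi (5 * N) = 1 ∧ Phi (5 * N + 1) = 1 := by
  have h0 := Phi_rec N 0 (by norm_num)
  have h1 := Phi_rec N 1 (by norm_num)
  rw [h] at h0 h1
  simp [phiMap] at h0 h1
  exact ⟨by simpa using h0, h1⟩

set_option maxRecDepth 10000 in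
def Qneg (n : ℕ) : Prop :=
  ∃ i, 3 * c0 (i + n) + 2 ≤ n + 3 * c0 i ∧ Phi (i + n) = 1 ∧ Phi (i + n + 1) = 1

set_option maxRecDepth 100000 in
lemma neg_c0_facts :
    c0 34 = 17 ∧ c0 38 = 18 ∧ c0 41 = 19 ∧ c0 42 = 20 ∧ c0 43 = 20 ∧ c0 44 = 21 ∧
    c0 48 = 22 ∧ c0 49 = 22 ∧ c0 50 = 22 ∧ c0 53 = 23 ∧ c0 54 = 23 ∧ c0 55 = 23 ∧
    c0 58 = 24 ∧ c0 236 = 90 ∧ c0 254 = 95 ∧ c0 255 = 95 := by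
  unfold c0
  rw [pre_eq 4 34 (by norm_num), pre_eq 4 38 (by norm_num), pre_eq 4 41 (by norm_num),
    pre_eq 4 42 (by norm_num), pre_eq 4 43 (by norm_num), pre_eq 4 44 (by norm_num),
    pre_eq 4 48 (by norm_num), pre_eq 4 49 (by norm_num), pre_eq 4 50 (by norm_num),
    pre_eq 4 53 (by norm_num), pre_eq 4 54 (by norm_num), pre_eq 4 55 (by norm_num),
    pre_eq 4 58 (by norm_num), pre_eq 4 236 (by norm_num), pre_eq 4 254 (by norm_num),
    pre_eq 4 255 (by norm_num)]
  decide

set_option maxRecDepth 100000 in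
lemma neg_letter_facts :
    Phi 49 = 1 ∧ Phi 50 = 1 ∧ Phi 51 = 1 ∧ Phi 53 = 1 ∧ Phi 54 = 1 ∧ Phi 55 = 1 ∧
    Phi 56 = 1 ∧ Phi 58 = 1 ∧ Phi 59 = 1 ∧ Phi 254 = 1 ∧ Phi 255 = 1 ∧ Phi 256 = 1 := by
  rw [Phi_eq_W 4 49 (by norm_num), Phi_eq_W 4 50 (by norm_num), Phi_eq_W 4 51 (by norm_num),
    Phi_eq_W 4 53 (by norm_num), Phi_eq_W 4 54 (by norm_num), Phi_eq_W 4 55 (by norm_num),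
    Phi_eq_W 4 56 (by norm_num), Phi_eq_W 4 58 (by norm_num), Phi_eq_W 4 59 (by norm_num),
    Phi_eq_W 4 254 (by norm_num), Phi_eq_W 4 255 (by norm_num), Phi_eq_W 4 256 (by norm_num)]
  decide

lemma neg_base : ∀ n, 5 ≤ n → n ≤ 20 → Qneg n := by
  obtain ⟨e34, e38, e41, e42, e43, e44, e48, e49, e50, e53, e54, e55, e58, e236, e254, e255⟩ :=
    neg_c0_facts
  obtain ⟨p49, p50, p51, p53, p54, p55, p56, p58, p59, p254, p255, p256⟩ := neg_letter_facts
  intro n h1 h2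
  interval_cases n
  · exact ⟨44, by norm_num; omega, p49, p50⟩
  · exact ⟨44, by norm_num; omega, p50, p51⟩
  · exact ⟨48, by norm_num; omega, p55, p56⟩
  · exact ⟨42, by norm_num; omega, p50, p51⟩
  · exact ⟨44, by norm_num; omega, p53, p54⟩
  · exact ⟨44, by norm_num; omega, p54, p55⟩
  · exact ⟨42, by norm_num; omega, p53, p54⟩
  · exact ⟨42, by norm_num; omega, p54, p55⟩
  · exact ⟨42, by norm_num; omega, p55, p56⟩
  · exact ⟨41, by norm_num; omega, p55, p56⟩
  · exact ⟨43, by norm_num; omega, p58, p59⟩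
  · exact ⟨42, by norm_num; omega, p58, p59⟩
  · exact ⟨38, by norm_num; omega, p55, p56⟩
  · exact ⟨236, by norm_num; omega, p254, p255⟩
  · exact ⟨236, by norm_num; omega, p255, p256⟩
  · exact ⟨34, by norm_num; omega, p54, p55⟩

lemma neg_all : ∀ n, 5 ≤ n → Qneg n := by
  intro n
  induction n using Nat.strong_induction_on with
  | _ n ih =>
    intro hn
    by_cases h20 : n ≤ 20
    · exact neg_base n hn h20
    · -- n ≥ 21
      set n' := (n + 4) / 5 with hn'
      have hd : n ≤ 5 * n' ∧ 5 * n' ≤ n + 4 := by omega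
      set d := 5 * n' - n with hdd
      have hd4 : d ≤ 4 := by omega
      have hn'5 : 5 ≤ n' := by omega
      have hn'lt : n' < n := by omega
      obtain ⟨i, hQ, h1, _⟩ := ih n' hn'lt hn'5
      refine ⟨5 * i + d, ?_, ?_, ?_⟩
      · -- count inequality
        have e1 : c0 (5 * (i + n')) = 3 * c0 (i + n') + c1 (i + n') +
            ((phiMap (Phi (i + n'))).take 0).count 0 := c0_rec (i + n') 0 (by norm_num)
        have e2 : c0 (5 * i + d) = 3 * c0 i + c1 i + ((phiMap (Phi i)).take d).count 0 :=
          c0_rec i d (by omega)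
        have e3 := c0_add_c1 (i + n')
        have e4 := c0_add_c1 i
        have e5 := (partial_count_bounds (Phi i) d (by omega)).1
        have heq : 5 * i + d + n = 5 * (i + n') := by omega
        rw [heq, e1, e2]
        simp only [List.take_zero, List.count_nil]
        omega
      · have heq : 5 * i + d + n = 5 * (i + n') := by omega
        rw [heq]
        exact (Phi_one_block (i + n') h1).1
      · have heq : 5 * i + d + n + 1 = 5 * (i + n') + 1 := by omega
        rw [heq]
        exact (Phi_one_block (i + n') h1).2


lemma length_factorAt (w : ℕ → ℕ) (i n : ℕ) : (factorAt w i n).length = n := by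
  simp [factorAt]

lemma c0_add_factor (i n : ℕ) : c0 (i + n) = c0 i + (factorAt Phi i n).count 0 := by
  unfold c0
  rw [show pre (i + n) = pre i ++ factorAt Phi i n by
    simp [pre, factorAt, List.range_add, Function.comp], List.count_append]

lemma factor_binary (i n : ℕ) : ∀ x ∈ factorAt Phi i n, x = 0 ∨ x = 1 := by
  intro x hx
  obtain ⟨j, _, rfl⟩ := List.mem_map.mp hx
  exact Phi_binary (i + j)

lemma ivt (f : ℕ → ℕ) (h : ∀ k, f k ≤ f (k + 1) + 1) :
    ∀ j x, f j ≤ x → x ≤ f 0 → ∃ k, f k = x := by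
  intro j
  induction j with
  | zero => intro x h1 h2; exact ⟨0, by omega⟩
  | succ j ih =>
    intro x h1 h2
    by_cases hx : f (j + 1) = x
    · exact ⟨j + 1, hx⟩
    · exact ih x (by have := h j; omega) h2

lemma window_step (n k : ℕ) :
    (factorAt Phi k n).count 0 ≤ (factorAt Phi (k + 1) n).count 0 + 1 := by
  have e1 := c0_add_factor k n
  have e2 := c0_add_factor (k + 1) n
  have e3 := c0_succ (k + n)
  have e4 := c0_succ k
  have heq : k + 1 + n = k + n + 1 := by omega
  rw [heq] at e2
  split at e3 <;> split at e4 <;> omega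


/-- Φ has the Frobenius property: for coprime positive `a`, `b`, all but finitely many
naturals are of the form `a * |u|₀ + b * |u|₁` for a factor `u` of Φ. -/
theorem Phi_frobenius_property (a b : ℕ) (ha : 0 < a) (hb : 0 < b)
    (hco : Nat.Coprime a b) :
    {m : ℕ | ¬ ∃ u : List ℕ, IsFactor Phi u ∧ m = a * u.count 0 + b * u.count 1}.Finite := by
  obtain ⟨s, hs⟩ : ∃ s, s = a + 2 * b := ⟨_, rfl⟩
  apply Set.Finite.subset (Set.finite_Iio ((a + b) * (2 * 5 ^ s + 5) + s * s * (b + 1)))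
  intro m hm
  simp only [Set.mem_setOf_eq] at hm
  rw [Set.mem_Iio]
  by_contra hM
  push_neg at hM
  apply hm; clear hm
  have hs1 : 0 < s := by omega
  haveI : NeZero b := ⟨hb.ne'⟩
  obtain ⟨X, hXdef⟩ : ∃ X, X = m / s + 1 := ⟨_, rfl⟩
  have hdm := Nat.div_add_mod m s
  have hmod : m % s < s := Nat.mod_lt m hs1
  have hsX : s * X = s * (m / s) + s := by rw [hXdef]; ring
  have hXlo : m < s * X := by omega
  have hXhi : s * X ≤ m + s := by omega
  obtain ⟨w, hw⟩ : ∃ w : (ZMod b)ˣ, w = ZMod.unitOfCoprime a hco := ⟨_, rfl⟩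
  obtain ⟨j, hjdef⟩ :
      ∃ j, j = (((m : ZMod b) - a * X) * ((w⁻¹ : (ZMod b)ˣ) : ZMod b)).val := ⟨_, rfl⟩
  have hjb : j < b := by rw [hjdef]; exact ZMod.val_lt _
  obtain ⟨x, hxdef⟩ : ∃ x, x = X + j := ⟨_, rfl⟩
  have hval : ((j : ℕ) : ZMod b) =
      ((m : ZMod b) - a * X) * ((w⁻¹ : (ZMod b)ˣ) : ZMod b) := by
    rw [hjdef]; exact ZMod.natCast_rightInverse _
  have hua : ((w : (ZMod b)ˣ) : ZMod b) = (a : ZMod b) := by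
    rw [hw]; exact ZMod.coe_unitOfCoprime a hco
  have hcong : ((a * x : ℕ) : ZMod b) = (m : ZMod b) := by
    push_cast [hxdef]
    rw [hval, ← hua]
    calc ((w : (ZMod b)ˣ) : ZMod b) * ((X : ZMod b) +
            ((m : ZMod b) - ((w : (ZMod b)ˣ) : ZMod b) * X) * ((w⁻¹ : (ZMod b)ˣ) : ZMod b))
        = (((w : (ZMod b)ˣ) : ZMod b) * ((w⁻¹ : (ZMod b)ˣ) : ZMod b)) *
            ((m : ZMod b) - ((w : (ZMod b)ˣ) : ZMod b) * X) +
            ((w : (ZMod b)ˣ) : ZMod b) * X := by ring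
      _ = (m : ZMod b) := by rw [Units.mul_inv]; ring
  have hmbig : s * (s * (b + 1)) ≤ m := by
    have h : s * (s * (b + 1)) = s * s * (b + 1) := by ring
    omega
  have hXge : s * (b + 1) < X := Nat.lt_of_mul_lt_mul_left (a := s) (by omega)
  have hsb1 : s * (b + 1) = s * b + s := by ring
  have hxs : s ≤ x := by omega
  have e1 : s * x = a * x + 2 * (b * x) := by rw [hs, hxdef]; ring
  have e2 : s * x = s * X + s * j := by rw [hxdef]; ring
  have ej : s * j ≤ s * (b - 1) := Nat.mul_le_mul_left s (by omega)
  have ejb : s * (b - 1) + s = s * b := by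
    have h : b - 1 + 1 = b := by omega
    calc s * (b - 1) + s = s * ((b - 1) + 1) := by ring
      _ = s * b := by rw [h]
  have hsxhi : s * x ≤ m + s * b := by omega
  have hsxlo : m < s * x := by omega
  have e3 : b * s ≤ b * x := Nat.mul_le_mul_left b hxs
  have e4 : s * b = b * s := by ring
  have haxm : a * x ≤ m := by omega
  have hdvd : b ∣ m - a * x :=
    (Nat.modEq_iff_dvd' haxm).mp ((ZMod.natCast_eq_natCast_iff _ _ _).mp hcong)
  obtain ⟨y, hy⟩ := hdvd
  have hmxy : m = a * x + b * y := by omega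
  have e5 : b * (2 * x) = 2 * (b * x) := by ring
  have hy2x : y ≤ 2 * x := Nat.le_of_mul_le_mul_left (by omega : b * y ≤ b * (2 * x)) hb
  obtain ⟨z, hzdef⟩ : ∃ z, z = 2 * x - y := ⟨_, rfl⟩
  have e6 : b * z + b * y = 2 * (b * x) := by
    have h : z + y = 2 * x := by omega
    calc b * z + b * y = b * (z + y) := by ring
      _ = b * (2 * x) := by rw [h]
      _ = 2 * (b * x) := by ring
  have hzs : z ≤ s := Nat.le_of_mul_le_mul_left (by omega : b * z ≤ b * s) hb
  obtain ⟨n, hndef⟩ : ∃ n, n = x + y := ⟨_, rfl⟩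
  have h3x : 3 * x = n + z := by omega
  have e7 : a * x ≤ a * n := Nat.mul_le_mul_left a (by omega)
  have e8 : b * y ≤ b * n := Nat.mul_le_mul_left b (by omega)
  have e9 : (a + b) * n = a * n + b * n := by ring
  have e10 : (a + b) * (2 * 5 ^ s + 5) ≤ (a + b) * n := by omega
  have hnbig : 2 * 5 ^ s + 5 ≤ n := Nat.le_of_mul_le_mul_left e10 (by omega)
  have hF := pos_growth s n (by omega)
  have h2s : s < 2 ^ s := Nat.lt_two_pow_self (n := s)
  have hc0n : n + s ≤ 3 * c0 n := by
    unfold F at hF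
    have h : (n : ℤ) + s ≤ 3 * (c0 n : ℤ) := by
      have h1 : ((s : ℕ) : ℤ) < ((2 ^ s : ℕ) : ℤ) := by exact_mod_cast h2s
      have h2 : ((2 ^ s : ℕ) : ℤ) = (2 : ℤ) ^ s := by push_cast; ring
      omega
    exact_mod_cast h
  have hxc0 : x ≤ c0 n := by omega
  obtain ⟨i, hQ, -, -⟩ := neg_all n (by omega)
  have hiwin := c0_add_factor i n
  have hfi : (factorAt Phi i n).count 0 ≤ x := by omega
  have hf0 : (factorAt Phi 0 n).count 0 = c0 n := by
    have h := c0_add_factor 0 n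
    have h0 : c0 0 = 0 := rfl
    simp only [Nat.zero_add] at h
    omega
  obtain ⟨k, hk⟩ := ivt (fun k => (factorAt Phi k n).count 0)
    (fun k => window_step n k) i x hfi (by simpa [hf0] using hxc0)

  refine ⟨factorAt Phi k n, ⟨k, by rw [length_factorAt]⟩, ?_⟩
  have hcnt := count_bin _ (factor_binary k n)
  rw [length_factorAt] at hcnt
  have h1cnt : (factorAt Phi k n).count 1 = y := by omega
  rw [hk, h1cnt]
  exact hmxy
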